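/- Let A, B ∈ GL_n(ℝ) and suppose there exists a nonzero r ∈ ℤ such that M := r·A^{-1}·B ∈ ℤ^{n×n}. Let S = V^{-1}·M·T^{-1} be a Smith decomposition of M (V, T ∈ ℤ^{n×n} unimodular, S in Smith normal form with diagonal entries s_1,…,s_n), let N be the diagonal integer matrix with N_{ii} = r / gcd(r, s_i), and set C := B·T^{-1}·N. Then (i) L(C) ⊆ L(A) and L(C) ⊆ L(B), and (ii) C has minimal determinant in absolute value among all common sublattices: for every invertible D ∈ ℝ^{n×n} with L(D) ⊆ L(A) and L(D) ⊆ L(B) one has |det D| ≥ |det C|. -/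

import Mathlib

open Matrix

/-- The lattice `L(A) = Aℤⁿ ⊆ ℝⁿ` spanned over `ℤ` by the columns of `A`. -/
def lattice (n : ℕ) (A : Matrix (Fin n) (Fin n) ℝ) : Set (Fin n → ℝ) :=
  {x | ∃ j : Fin n → ℤ, x = A.mulVec fun i => (j i : ℝ)}

namespace LatticeLCM

noncomputable section

variable {n : ℕ}

/-- Casting a matrix product. -/
lemma map_mul' (M N : Matrix (Fin n) (Fin n) ℤ) :
    (M * N).map (Int.cast : ℤ → ℝ) = M.map Int.cast * N.map Int.cast := by
  exact_mod_cast (Int.castRingHom ℝ).mapMatrix.map_mul M N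

lemma map_one' : ((1 : Matrix (Fin n) (Fin n) ℤ)).map (Int.cast : ℤ → ℝ) = 1 :=
  Matrix.map_one Int.cast Int.cast_zero Int.cast_one

lemma det_map' (T : Matrix (Fin n) (Fin n) ℤ) :
    (T.map (Int.cast : ℤ → ℝ)).det = ((T.det : ℤ) : ℝ) :=
  (RingHom.map_det (Int.castRingHom ℝ) T).symm

lemma mapZSmul (r : ℤ) (M : Matrix (Fin n) (Fin n) ℤ) :
    ((r • M).map (Int.cast : ℤ → ℝ)) = (r : ℝ) • M.map Int.cast := by
  ext i j
  simp only [Matrix.map_apply, Matrix.smul_apply, smul_eq_mul, Int.cast_mul]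

lemma map_inj {M N : Matrix (Fin n) (Fin n) ℤ}
    (h : M.map (Int.cast : ℤ → ℝ) = N.map Int.cast) : M = N := by
  ext i j
  have := congrFun (congrFun h i) j
  simp only [Matrix.map_apply] at this
  exact_mod_cast this

lemma mulVec_map (M : Matrix (Fin n) (Fin n) ℤ) (v : Fin n → ℤ) :
    (M.map (Int.cast : ℤ → ℝ)).mulVec (fun i => (v i : ℝ)) =
      fun i => ((M.mulVec v i : ℤ) : ℝ) := by
  funext i
  simp [Matrix.mulVec, dotProduct, Matrix.map_apply]

/-- If `C = A * E` with `E` integral then `L(C) ⊆ L(A)`. -/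
lemma lattice_subset (A C : Matrix (Fin n) (Fin n) ℝ) (E : Matrix (Fin n) (Fin n) ℤ)
    (h : C = A * E.map (Int.cast : ℤ → ℝ)) : lattice n C ⊆ lattice n A := by
  rintro x ⟨j, rfl⟩
  refine ⟨E.mulVec j, ?_⟩
  rw [h, ← Matrix.mulVec_mulVec, mulVec_map]

/-- If `L(D) ⊆ L(A)` then `D = A * E` with `E` integral. -/
lemma exists_int_of_subset (A D : Matrix (Fin n) (Fin n) ℝ)
    (h : lattice n D ⊆ lattice n A) :
    ∃ E : Matrix (Fin n) (Fin n) ℤ, D = A * E.map (Int.cast : ℤ → ℝ) := by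
  have hcol : ∀ j : Fin n, ∃ w : Fin n → ℤ,
      (fun i => D i j) = A.mulVec fun i => ((w i : ℤ) : ℝ) := by
    intro j
    have : (fun i => D i j) ∈ lattice n D := by
      refine ⟨fun i => if i = j then 1 else 0, ?_⟩
      funext i
      simp [Matrix.mulVec, dotProduct]
    exact h this
  choose w hw using hcol
  refine ⟨Matrix.of fun k j => w j k, ?_⟩
  ext i j
  have := congrFun (hw j) i
  simpa [Matrix.mul_apply, Matrix.mulVec, dotProduct, Matrix.map_apply] using this

/-- Key divisibility: if `r ∣ s * q` then `r / gcd r s ∣ q`. -/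
lemma key_dvd (r s q : ℤ) (hr : r ≠ 0) (h : r ∣ s * q) :
    (r / (Int.gcd r s : ℤ)) ∣ q := by
  have hg : 0 < Int.gcd r s :=
    Nat.pos_of_ne_zero fun h0 => hr (Int.gcd_eq_zero_iff.mp h0).1
  set d : ℤ := (Int.gcd r s : ℤ) with hd
  have hdpos : 0 < d := by rw [hd]; exact_mod_cast hg
  have hdr : d ∣ r := Int.gcd_dvd_left _ _
  have hds : d ∣ s := Int.gcd_dvd_right _ _
  obtain ⟨t, ht⟩ := h
  have h2 : (r / d) ∣ (s / d) * q := by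
    refine ⟨t, ?_⟩
    apply mul_left_cancel₀ hdpos.ne'
    rw [← mul_assoc, ← mul_assoc, Int.mul_ediv_cancel' hds, Int.mul_ediv_cancel' hdr, ht]
  have hcop : IsCoprime (r / d) (s / d) := by
    rw [Int.isCoprime_iff_gcd_eq_one]
    exact Int.gcd_div_gcd_div_gcd hg
  exact hcop.dvd_of_dvd_mul_left h2

end

end LatticeLCM

open LatticeLCM

/-- Least common multiple of two lattices: if `M = r·A⁻¹·B` is integral with Smith
decomposition `S = V⁻¹·M·T⁻¹`, and `N` is diagonal with `N_{ii} = r / gcd(r, sᵢ)`, then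
`C = B·T⁻¹·N` spans a common sublattice of `L(A)` and `L(B)` of minimal determinant in
absolute value. -/
theorem lattice_least_common_multiple
    (n : ℕ) (A B : Matrix (Fin n) (Fin n) ℝ)
    (hA : IsUnit A.det) (hB : IsUnit B.det)
    (r : ℤ) (hr : r ≠ 0)
    (M V S T : Matrix (Fin n) (Fin n) ℤ)
    (hM : (r : ℝ) • (A⁻¹ * B) = M.map (Int.cast : ℤ → ℝ))
    (hV : V.det = 1 ∨ V.det = -1)
    (hT : T.det = 1 ∨ T.det = -1)
    (hSmith : V * S * T = M)
    (hSdiag : ∀ i j : Fin n, i ≠ j → S i j = 0)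
    (hSdiv : ∀ i : Fin n, ∀ h : (i : ℕ) + 1 < n,
      S i i ∣ S ⟨(i : ℕ) + 1, h⟩ ⟨(i : ℕ) + 1, h⟩)
    (N : Matrix (Fin n) (Fin n) ℤ)
    (hN : N = Matrix.diagonal fun i => r / (Int.gcd r (S i i) : ℤ))
    (C : Matrix (Fin n) (Fin n) ℝ)
    (hC : C = B * (T.map (Int.cast : ℤ → ℝ))⁻¹ * N.map (Int.cast : ℤ → ℝ)) :
    lattice n C ⊆ lattice n A ∧ lattice n C ⊆ lattice n B ∧
      ∀ D : Matrix (Fin n) (Fin n) ℝ, IsUnit D.det →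
        lattice n D ⊆ lattice n A → lattice n D ⊆ lattice n B →
          |C.det| ≤ |D.det| := by
  have hrR : (r : ℝ) ≠ 0 := Int.cast_ne_zero.mpr hr
  have hVu : IsUnit V.det := by rcases hV with h | h <;> simp [h]
  have hTu : IsUnit T.det := by rcases hT with h | h <;> simp [h]
  -- r • B = A * M.map cast
  have hrB : (r : ℝ) • B = A * M.map (Int.cast : ℤ → ℝ) := by
    have := congrArg (fun X => A * X) hM
    simpa [Matrix.mul_smul, ← Matrix.mul_assoc, Matrix.mul_nonsing_inv A hA] using this
  -- T cast inverse is integral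
  have hTinv : (T.map (Int.cast : ℤ → ℝ))⁻¹ = (T⁻¹).map (Int.cast : ℤ → ℝ) := by
    apply Matrix.inv_eq_right_inv
    rw [← map_mul', Matrix.mul_nonsing_inv T hTu, map_one']
  have hTTinv : T * T⁻¹ = 1 := Matrix.mul_nonsing_inv T hTu
  have hTinvT : T⁻¹ * T = 1 := Matrix.nonsing_inv_mul T hTu
  have hVVinv : V * V⁻¹ = 1 := Matrix.mul_nonsing_inv V hVu
  have hVinvV : V⁻¹ * V = 1 := Matrix.nonsing_inv_mul V hVu
  -- C = B * (T⁻¹ * N) cast : gives L(C) ⊆ L(B)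
  have hCB : C = B * ((T⁻¹ * N).map (Int.cast : ℤ → ℝ)) := by
    rw [hC, map_mul', hTinv, Matrix.mul_assoc]
  -- the diagonal entry identity
  have hSN : S * N = r • Matrix.diagonal (fun i => S i i / (Int.gcd r (S i i) : ℤ)) := by
    rw [hN]
    ext i j
    rw [Matrix.mul_diagonal]
    rcases eq_or_ne i j with rfl | hij
    · simp only [Matrix.smul_apply, Matrix.diagonal_apply_eq, smul_eq_mul]
      rw [← Int.mul_ediv_assoc _ (Int.gcd_dvd_left _ _), mul_comm (S i i) r,
        Int.mul_ediv_assoc _ (Int.gcd_dvd_right _ _)]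
    · rw [hSdiag i j hij, zero_mul]
      simp [Matrix.diagonal_apply_ne _ hij]
  -- C = A * (V * diag(s/d)) cast : gives L(C) ⊆ L(A)
  have hintC : M * (T⁻¹ * N) = r • (V * Matrix.diagonal
      (fun i => S i i / (Int.gcd r (S i i) : ℤ))) := by
    rw [← hSmith]
    calc V * S * T * (T⁻¹ * N) = V * S * (T * T⁻¹) * N := by noncomm_ring
      _ = V * (S * N) := by rw [hTTinv, Matrix.mul_one, Matrix.mul_assoc]
      _ = r • (V * Matrix.diagonal (fun i => S i i / (Int.gcd r (S i i) : ℤ))) := by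
          rw [hSN, Matrix.mul_smul]
  have hCA : C = A * ((V * Matrix.diagonal
      (fun i => S i i / (Int.gcd r (S i i) : ℤ))).map (Int.cast : ℤ → ℝ)) := by
    apply smul_right_injective _ hrR
    calc (r : ℝ) • C = ((r : ℝ) • B) * ((T⁻¹ * N).map (Int.cast : ℤ → ℝ)) := by
          rw [hCB, Matrix.smul_mul]
      _ = A * ((M * (T⁻¹ * N)).map (Int.cast : ℤ → ℝ)) := by
          rw [hrB]
          simp only [map_mul', Matrix.mul_assoc]
      _ = (r : ℝ) • (A * ((V * Matrix.diagonal
            (fun i => S i i / (Int.gcd r (S i i) : ℤ))).map (Int.cast : ℤ → ℝ))) := by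
          rw [hintC, mapZSmul, Matrix.mul_smul]
  refine ⟨lattice_subset A C _ hCA, lattice_subset B C _ hCB, ?_⟩
  -- minimality
  intro D hD hDA hDB
  obtain ⟨P, hP⟩ := exists_int_of_subset A D hDA
  obtain ⟨Q, hQ⟩ := exists_int_of_subset B D hDB
  -- r • P = M * Q over ℤ
  have hPQ : r • P = M * Q := by
    apply map_inj
    rw [mapZSmul, map_mul']
    have h1 : A * ((r : ℝ) • P.map (Int.cast : ℤ → ℝ)) =
        A * (M.map (Int.cast : ℤ → ℝ) * Q.map (Int.cast : ℤ → ℝ)) := by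
      rw [Matrix.mul_smul, ← hP, ← Matrix.mul_assoc, ← hrB, Matrix.smul_mul, ← hQ]
    calc (r : ℝ) • P.map (Int.cast : ℤ → ℝ)
        = A⁻¹ * (A * ((r : ℝ) • P.map (Int.cast : ℤ → ℝ))) := by
          rw [← Matrix.mul_assoc, Matrix.nonsing_inv_mul A hA, Matrix.one_mul]
      _ = A⁻¹ * (A * (M.map (Int.cast : ℤ → ℝ) * Q.map (Int.cast : ℤ → ℝ))) := by rw [h1]
      _ = M.map (Int.cast : ℤ → ℝ) * Q.map (Int.cast : ℤ → ℝ) := by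
          rw [← Matrix.mul_assoc, Matrix.nonsing_inv_mul A hA, Matrix.one_mul]
  -- S * (T*Q) = r • (V⁻¹ * P)
  have hSQ : S * (T * Q) = r • (V⁻¹ * P) := by
    have : V⁻¹ * (r • P) = V⁻¹ * (V * S * T * Q) := by rw [hPQ, ← hSmith]
    calc S * (T * Q) = (V⁻¹ * V) * S * T * Q := by
          rw [hVinvV, Matrix.one_mul, Matrix.mul_assoc]
      _ = V⁻¹ * (V * S * T * Q) := by noncomm_ring
      _ = V⁻¹ * (r • P) := this.symm
      _ = r • (V⁻¹ * P) := by rw [Matrix.mul_smul]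
  -- divisibility of entries of T*Q
  have hdvd : ∀ i j, (r / (Int.gcd r (S i i) : ℤ)) ∣ (T * Q) i j := by
    intro i j
    apply key_dvd r (S i i) _ hr
    have h2 : (S * (T * Q)) i j = S i i * (T * Q) i j := by
      rw [Matrix.mul_apply]
      apply Finset.sum_eq_single_of_mem i (Finset.mem_univ i)
      intro k _ hk
      rw [hSdiag i k (Ne.symm hk), zero_mul]
    refine ⟨(V⁻¹ * P) i j, ?_⟩
    rw [← h2, hSQ]
    simp
  -- build Q''
  set Q'' : Matrix (Fin n) (Fin n) ℤ :=
    Matrix.of fun i j => (T * Q) i j / (r / (Int.gcd r (S i i) : ℤ)) with hQ''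
  have hNQ : N * Q'' = T * Q := by
    ext i j
    rw [hN, Matrix.diagonal_mul]
    exact Int.mul_ediv_cancel' (hdvd i j)
  -- D = C * Q'' cast
  have hQeq : Q = (T⁻¹ * N) * Q'' := by
    rw [Matrix.mul_assoc, hNQ, ← Matrix.mul_assoc, hTinvT, Matrix.one_mul]
  have hDC : D = C * Q''.map (Int.cast : ℤ → ℝ) := by
    rw [hQ, hQeq, hCB, map_mul', Matrix.mul_assoc]
  have hdet : D.det = C.det * ((Q''.det : ℤ) : ℝ) := by
    rw [hDC, Matrix.det_mul, LatticeLCM.det_map']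
  have hq0 : Q''.det ≠ 0 := by
    intro h0
    rw [hdet, h0] at hD
    simp at hD
  have h1q : (1 : ℝ) ≤ |((Q''.det : ℤ) : ℝ)| := by
    have := Int.one_le_abs hq0
    calc (1 : ℝ) = ((1 : ℤ) : ℝ) := by norm_num
      _ ≤ ((|Q''.det| : ℤ) : ℝ) := by exact_mod_cast this
      _ = |((Q''.det : ℤ) : ℝ)| := by push_cast; ring
  calc |C.det| = |C.det| * 1 := by ring
    _ ≤ |C.det| * |((Q''.det : ℤ) : ℝ)| :=
        mul_le_mul_of_nonneg_left h1q (abs_nonneg _)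
    _ = |D.det| := by rw [hdet, abs_mul]
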